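/- Let λ ∈ ℝ and let w : ℝ → ℝ be continuous, 2π-periodic, odd with respect to λ (i.e., w(2λ − x) = −w(x) for all x ∈ ℝ), with w(x) ≥ 0 for all x ∈ [λ, λ+π], and w not identically zero. Then the function x ↦ (K∗w)(x) is differentiable at λ and its derivative at λ is strictly positive. -/

import Mathlib

open Real MeasureTheory Filter
open Set

/-- The 2π-periodic kernel of `D⁻²`, equal to `(1/(4π))(|x|−π)² − π/12` on `[−π,π]`. -/
noncomputable def Kper (x : ℝ) : ℝ :=
  (1 / (4 * π)) * (|x - 2 * π * ((round (x / (2 * π)) : ℤ) : ℝ)| - π) ^ 2 - π / 12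

/-- Periodic convolution with the kernel `Kper`. -/
noncomputable def Kconv (φ : ℝ → ℝ) (x : ℝ) : ℝ :=
  ∫ y in (-π)..π, Kper (x - y) * φ y

noncomputable def Kd (t : ℝ) : ℝ :=
  (|t - 2 * π * ((round (t / (2 * π)) : ℤ) : ℝ)| - π) *
    Real.sign (t - 2 * π * ((round (t / (2 * π)) : ℤ) : ℝ)) / (2 * π)

lemma u_eq (t : ℝ) :
    t - 2 * π * ((round (t / (2 * π)) : ℤ) : ℝ)
      = 2 * π * (t / (2 * π) - ((round (t / (2 * π)) : ℤ) : ℝ)) := by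
  have h : (2 * π) ≠ 0 := Real.two_pi_pos.ne'
  field_simp

lemma abs_u_le (t : ℝ) : |t - 2 * π * ((round (t / (2 * π)) : ℤ) : ℝ)| ≤ π := by
  rw [u_eq, abs_mul, abs_of_pos Real.two_pi_pos]
  have h := abs_sub_round (t / (2 * π))
  nlinarith [Real.pi_pos]

lemma u_min (x : ℝ) (k : ℤ) :
    |x - 2 * π * ((round (x / (2 * π)) : ℤ) : ℝ)| ≤ |x - 2 * π * (k : ℝ)| := by
  have h2pi := Real.two_pi_pos
  have h2 : x - 2 * π * (k : ℝ) = 2 * π * (x / (2 * π) - (k : ℝ)) := by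
    have h : (2 * π) ≠ 0 := h2pi.ne'
    field_simp
  set s := x / (2 * π) with hs
  have core : |s - ((round s : ℤ) : ℝ)| ≤ |s - (k : ℝ)| := by
    rcases eq_or_ne (round s) k with h | h
    · rw [h]
    · have h1 : (1 : ℝ) ≤ |((round s : ℤ) : ℝ) - (k : ℝ)| := by
        exact_mod_cast Int.one_le_abs (sub_ne_zero.mpr h)
      have h3 : |s - ((round s : ℤ) : ℝ)| ≤ 1 / 2 := abs_sub_round s
      have h4 : |((round s : ℤ) : ℝ) - (k : ℝ)|
          ≤ |((round s : ℤ) : ℝ) - s| + |s - (k : ℝ)| := by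
        calc |((round s : ℤ) : ℝ) - (k : ℝ)|
            = |(((round s : ℤ) : ℝ) - s) + (s - (k : ℝ))| := by ring_nf
          _ ≤ _ := abs_add_le _ _
      rw [abs_sub_comm ((round s : ℤ) : ℝ) s] at h4
      linarith
  calc |x - 2 * π * ((round s : ℤ) : ℝ)| = 2 * π * |s - ((round s : ℤ) : ℝ)| := by
        rw [u_eq, ← hs, abs_mul, abs_of_pos h2pi]
    _ ≤ 2 * π * |s - (k : ℝ)| := mul_le_mul_of_nonneg_left core h2pi.le
    _ = |x - 2 * π * (k : ℝ)| := by rw [h2, abs_mul, abs_of_pos h2pi]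

lemma Kper_dist (x y : ℝ) : |Kper x - Kper y| ≤ (1 / 2) * |x - y| := by
  set a := |x - 2 * π * ((round (x / (2 * π)) : ℤ) : ℝ)| with ha
  set b := |y - 2 * π * ((round (y / (2 * π)) : ℤ) : ℝ)| with hb
  have ha0 : 0 ≤ a := abs_nonneg _
  have hb0 : 0 ≤ b := abs_nonneg _
  have haπ : a ≤ π := abs_u_le x
  have hbπ : b ≤ π := abs_u_le y
  have hab : |a - b| ≤ |x - y| := by
    rw [abs_sub_le_iff]
    constructor
    · have h1 : a ≤ |x - 2 * π * ((round (y / (2 * π)) : ℤ) : ℝ)| := u_min x _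
      have h2 : |x - 2 * π * ((round (y / (2 * π)) : ℤ) : ℝ)| ≤ |x - y| + b := by
        calc |x - 2 * π * ((round (y / (2 * π)) : ℤ) : ℝ)|
            = |(x - y) + (y - 2 * π * ((round (y / (2 * π)) : ℤ) : ℝ))| := by ring_nf
          _ ≤ _ := abs_add_le _ _
      linarith
    · have h1 : b ≤ |y - 2 * π * ((round (x / (2 * π)) : ℤ) : ℝ)| := u_min y _
      have h2 : |y - 2 * π * ((round (x / (2 * π)) : ℤ) : ℝ)| ≤ |y - x| + a := by
        calc |y - 2 * π * ((round (x / (2 * π)) : ℤ) : ℝ)|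
            = |(y - x) + (x - 2 * π * ((round (x / (2 * π)) : ℤ) : ℝ))| := by ring_nf
          _ ≤ _ := abs_add_le _ _
      rw [abs_sub_comm y x] at h2
      linarith
  have hkey : Kper x - Kper y = (1 / (4 * π)) * ((a - b) * (a + b - 2 * π)) := by
    unfold Kper; rw [← ha, ← hb]; ring
  rw [hkey, abs_mul, abs_mul]
  have h4π : 0 < 4 * π := by positivity
  rw [abs_of_pos (by positivity : (0:ℝ) < 1 / (4*π))]
  have h5 : |a + b - 2 * π| ≤ 2 * π := by
    rw [abs_le]; constructor <;> nlinarith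
  calc 1 / (4 * π) * (|a - b| * |a + b - 2 * π|) ≤ 1 / (4 * π) * (|x - y| * (2 * π)) := by
        have := abs_nonneg (a - b)
        have := abs_nonneg (x - y)
        have h6 : 0 ≤ |a + b - 2*π| := abs_nonneg _
        apply mul_le_mul_of_nonneg_left _ (by positivity)
        nlinarith
    _ = (1/2) * |x - y| := by field_simp; ring

lemma Kper_lipschitzWith : LipschitzWith (1/2 : NNReal) Kper := by
  apply LipschitzWith.of_dist_le_mul
  intro x y
  rw [Real.dist_eq, Real.dist_eq]
  have := Kper_dist x y
  have hc : ((1/2 : NNReal) : ℝ) = 1/2 := by norm_num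
  rw [hc]
  exact this

lemma Kper_continuous : Continuous Kper := Kper_lipschitzWith.continuous

lemma Kd_periodic : Function.Periodic Kd (2 * π) := by
  intro t
  unfold Kd
  have h1 : (t + 2 * π) / (2 * π) = t / (2 * π) + 1 := by
    field_simp
  rw [h1, round_add_one]
  have h2 : t + 2 * π - 2 * π * ((round (t / (2 * π)) + 1 : ℤ) : ℝ)
      = t - 2 * π * ((round (t / (2 * π)) : ℤ) : ℝ) := by push_cast; ring
  rw [h2]

lemma round_loc_const {t : ℝ} (h : ∀ m : ℤ, t / (2 * π) + 1 / 2 ≠ (m : ℝ)) :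
    ∀ᶠ x in nhds t, round (x / (2 * π)) = round (t / (2 * π)) := by
  set c := t / (2 * π) + 1 / 2 with hc
  have hfl : ((⌊c⌋ : ℤ) : ℝ) < c := by
    rcases lt_or_eq_of_le (Int.floor_le c) with h' | h'
    · exact h'
    · exact absurd h'.symm (h ⌊c⌋)
  have hfu : c < (⌊c⌋ : ℝ) + 1 := Int.lt_floor_add_one c
  have hcont : ContinuousAt (fun x : ℝ => x / (2 * π) + 1 / 2) t := by fun_prop
  have hev : ∀ᶠ x in nhds t, x / (2 * π) + 1 / 2 ∈ Set.Ioo ((⌊c⌋ : ℝ)) ((⌊c⌋ : ℝ) + 1) :=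
    hcont.eventually_mem (isOpen_Ioo.mem_nhds ⟨hfl, hfu⟩)
  filter_upwards [hev] with x hx
  rw [round_eq, round_eq, ← hc]
  have h1 : ⌊x / (2 * π) + 1 / 2⌋ = ⌊c⌋ := Int.floor_eq_iff.mpr ⟨hx.1.le, by exact_mod_cast hx.2⟩
  rw [h1]

lemma hasDerivAt_Kper {t : ℝ} (h : ∀ k : ℤ, t ≠ π * (k : ℝ)) : HasDerivAt Kper (Kd t) t := by
  set n := round (t / (2 * π)) with hn
  set u := t - 2 * π * ((n : ℤ) : ℝ) with hu
  have hu0 : u ≠ 0 := by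
    intro h0
    exact h (2 * n) (by rw [hu] at h0; push_cast at h0 ⊢; linarith)
  have hhalf : ∀ m : ℤ, t / (2 * π) + 1 / 2 ≠ (m : ℝ) := by
    intro m hm
    apply h (2 * m - 1)
    have hπ : (2 * π) ≠ 0 := Real.two_pi_pos.ne'
    field_simp at hm
    push_cast
    linarith
  have hev : ∀ᶠ x in nhds t,
      Kper x = (1 / (4 * π)) * (|x - 2 * π * ((n : ℤ) : ℝ)| - π) ^ 2 - π / 12 := by
    filter_upwards [round_loc_const hhalf] with x hx
    unfold Kper
    rw [hx, ← hn]
  have habs : HasDerivAt (fun x : ℝ => |x - 2 * π * ((n : ℤ) : ℝ)|) ((SignType.sign u : ℝ)) t := by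
    have h1 : HasDerivAt (fun x : ℝ => x - 2 * π * ((n : ℤ) : ℝ)) 1 t :=
      (hasDerivAt_id t).sub_const _
    have h2 := (hasDerivAt_abs hu0).comp t h1
    simpa [Function.comp_def] using h2
  have hmain : HasDerivAt
      (fun x => (1 / (4 * π)) * (|x - 2 * π * ((n : ℤ) : ℝ)| - π) ^ 2 - π / 12) (Kd t) t := by
    have h2 := ((((habs.sub_const π).pow 2).const_mul (1 / (4 * π))).sub_const (π / 12))
    refine HasDerivAt.congr_deriv h2 (Eq.symm ?_)
    show Kd t = _
    have hπ : π ≠ 0 := Real.pi_pos.ne'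
    unfold Kd
    rw [← hn, ← hu]
    rcases hu0.lt_or_gt with hlt | hlt
    · rw [Real.sign_of_neg hlt, sign_neg hlt, abs_of_neg hlt]
      push_cast
      field_simp
      simp only [SignType.coe_one]
      ring
    · rw [Real.sign_of_pos hlt, sign_pos hlt, abs_of_pos hlt]
      push_cast
      field_simp
      simp only [SignType.coe_one]
      ring
  exact hmain.congr_of_eventuallyEq hev

lemma round_small {r : ℝ} (h1 : -(1/2) ≤ r) (h2 : r < 1/2) : round r = 0 :=
  round_eq_zero_iff.mpr ⟨h1, h2⟩

lemma Kd_eval_neg {s : ℝ} (h1 : 0 < s) (h2 : s < π) : Kd (-s) = (π - s) / (2 * π) := by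
  have h2pi := Real.two_pi_pos
  have hr : round (-s / (2 * π)) = 0 := by
    apply round_small
    · rw [neg_div, neg_le_neg_iff, div_le_div_iff₀ h2pi (by norm_num : (0:ℝ) < 2)]
      linarith
    · rw [neg_div]
      have : 0 < s / (2 * π) := div_pos h1 h2pi
      linarith
  unfold Kd
  rw [hr]
  push_cast
  rw [mul_zero, sub_zero, abs_of_neg (neg_neg_iff_pos.mpr h1 : -s < 0),
    Real.sign_of_neg (neg_neg_iff_pos.mpr h1 : -s < 0)]
  ring

lemma Kd_eval_pos {s : ℝ} (h1 : 0 < s) (h2 : s < π) : Kd s = (s - π) / (2 * π) := by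
  have h2pi := Real.two_pi_pos
  have hr : round (s / (2 * π)) = 0 := by
    apply round_small
    · have : 0 < s / (2 * π) := div_pos h1 h2pi
      linarith
    · rw [div_lt_div_iff₀ h2pi (by norm_num : (0:ℝ) < 2)]
      linarith
  unfold Kd
  rw [hr]
  push_cast
  rw [mul_zero, sub_zero, abs_of_pos h1, Real.sign_of_pos h1]
  ring

lemma Kd_abs_le (t : ℝ) : |Kd t| ≤ 1 := by
  have h2pi := Real.two_pi_pos
  unfold Kd
  rw [abs_div, abs_mul, abs_of_pos h2pi]
  have h1 : |(|t - 2 * π * ((round (t / (2 * π)) : ℤ) : ℝ)| - π)| ≤ π := by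
    have := abs_u_le t
    have := abs_nonneg (t - 2 * π * ((round (t / (2 * π)) : ℤ) : ℝ))
    rw [abs_le]
    constructor <;> linarith
  have h2 : |Real.sign (t - 2 * π * ((round (t / (2 * π)) : ℤ) : ℝ))| ≤ 1 := by
    rcases Real.sign_apply_eq (t - 2 * π * ((round (t / (2 * π)) : ℤ) : ℝ)) with h | h | h <;>
      rw [h] <;> norm_num
  rw [div_le_one h2pi]
  nlinarith [abs_nonneg (|t - 2 * π * ((round (t / (2 * π)) : ℤ) : ℝ)| - π),
    abs_nonneg (Real.sign (t - 2 * π * ((round (t / (2 * π)) : ℤ) : ℝ))), Real.pi_pos]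

lemma measurable_Kd : Measurable Kd := by
  have hround : Measurable (fun t : ℝ => ((round (t / (2 * π)) : ℤ) : ℝ)) := by
    have h1 : Measurable (fun t : ℝ => (⌊t / (2 * π) + 1 / 2⌋ : ℤ)) :=
      Int.measurable_floor.comp (by fun_prop)
    have h2 : Measurable ((fun n : ℤ => (n : ℝ)) ∘ fun t : ℝ => (⌊t / (2 * π) + 1 / 2⌋ : ℤ)) :=
      Measurable.comp (fun _ _ => trivial) h1
    convert h2 using 1
    funext t
    simp [round_eq, Function.comp]
  have hsign : Measurable Real.sign := by
    have h : Real.sign = fun r : ℝ => if r < 0 then (-1 : ℝ) else if 0 < r then 1 else 0 := rfl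
    rw [h]
    refine Measurable.ite (measurableSet_lt measurable_id measurable_const) measurable_const ?_
    exact Measurable.ite (measurableSet_lt measurable_const measurable_id)
      measurable_const measurable_const
  have hu : Measurable (fun t : ℝ => t - 2 * π * ((round (t / (2 * π)) : ℤ) : ℝ)) :=
    measurable_id.sub ((measurable_const.mul hround))
  exact ((hu.abs.sub measurable_const).mul (hsign.comp hu)).div_const _

lemma Kd_intervalIntegrable {v : ℝ → ℝ} (hv : Continuous v) (c e a b : ℝ) :
    IntervalIntegrable (fun y => Kd (c + e * y) * v y) volume a b := by
  apply IntervalIntegrable.mono_fun ((hv.abs).intervalIntegrable a b)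
  · exact ((measurable_Kd.comp (measurable_const.add (measurable_const.mul measurable_id))).mul
      hv.measurable).aestronglyMeasurable
  · filter_upwards with y
    simp only [Real.norm_eq_abs, abs_mul, abs_abs]
    have h1 := Kd_abs_le (c + e * y)
    have h2 := abs_nonneg (v y)
    nlinarith [abs_nonneg (Kd (c + e * y))]


/-- If `w` is continuous, 2π-periodic, odd about `λ`, nonnegative on `[λ, λ+π]` and not
identically zero, then `K∗w` is differentiable at `λ` with strictly positive derivative. -/
theorem Kconv_deriv_pos (l : ℝ) (w : ℝ → ℝ) (hwc : Continuous w)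
    (hwp : Function.Periodic w (2 * π))
    (hodd : ∀ x, w (2 * l - x) = -w x)
    (hge : ∀ x ∈ Set.Icc l (l + π), 0 ≤ w x)
    (hne : ∃ x, w x ≠ 0) :
    DifferentiableAt ℝ (Kconv w) l ∧ 0 < deriv (Kconv w) l := by
  have hπ := Real.pi_pos
  have h2π := Real.two_pi_pos
  -- derivative via dominated convergence
  obtain ⟨hF'int, hder⟩ :=
    intervalIntegral.hasDerivAt_integral_of_dominated_loc_of_lip
      (F := fun x y => Kper (x - y) * w y) (F' := fun y => Kd (l - y) * w y)
      (x₀ := l) (a := -π) (b := π) (bound := fun y => |w y|) (μ := volume)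
      (Metric.ball_mem_nhds l one_pos)
      (Eventually.of_forall fun x =>
        ((Kper_continuous.comp (continuous_const.sub continuous_id)).mul hwc).aestronglyMeasurable)
      (((Kper_continuous.comp (continuous_const.sub continuous_id)).mul hwc).intervalIntegrable _ _)
      (((measurable_Kd.comp (measurable_const.sub measurable_id)).mul
        hwc.measurable).aestronglyMeasurable)
      (Eventually.of_forall fun t _ => by
        apply LipschitzWith.lipschitzOnWith
        apply LipschitzWith.of_dist_le_mul
        intro x y
        rw [Real.dist_eq, Real.dist_eq]
        have hc : ((Real.nnabs (|w t|) : NNReal) : ℝ) = |w t| := by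
          rw [Real.coe_nnabs, abs_abs]
        rw [hc]
        have h1 : Kper (x - t) * w t - Kper (y - t) * w t = (Kper (x - t) - Kper (y - t)) * w t := by
          ring
        rw [h1, abs_mul]
        have h2 := Kper_dist (x - t) (y - t)
        have h3 : x - t - (y - t) = x - y := by ring
        rw [h3] at h2
        have h4 := abs_nonneg (w t)
        have h5 := abs_nonneg (x - y)
        nlinarith)
      ((hwc.abs).intervalIntegrable _ _)
      (by
        have hS : ∀ᵐ y : ℝ, y ∉ Set.range (fun k : ℤ => l - π * (k : ℝ)) :=
          measure_eq_zero_iff_ae_notMem.mp ((Set.countable_range _).measure_zero _)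
        filter_upwards [hS] with y hy _
        have hk : ∀ k : ℤ, l - y ≠ π * (k : ℝ) := by
          intro k hk'
          apply hy
          refine ⟨k, ?_⟩
          show l - π * (k : ℝ) = y
          linarith
        have h1 : HasDerivAt (fun x => Kper (x - y)) (Kd (l - y)) l := by
          have := (hasDerivAt_Kper hk).comp l ((hasDerivAt_id l).sub_const y)
          simpa [Function.comp_def] using this
        exact h1.mul_const (w y))
  have hKconv : Kconv w = fun x => ∫ y in (-π)..π, Kper (x - y) * w y := rfl
  refine ⟨hKconv ▸ hder.differentiableAt, ?_⟩
  have hderiv : deriv (Kconv w) l = ∫ y in (-π)..π, Kd (l - y) * w y := by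
    rw [hKconv]; exact hder.deriv
  rw [hderiv]
  -- basic vanishing values
  have hwl : w l = 0 := by
    have h := hodd l
    rw [show 2 * l - l = l by ring] at h
    linarith
  have hwlpi : w (l + π) = 0 := by
    have h1 := hodd (l + π)
    rw [show 2 * l - (l + π) = l - π by ring] at h1
    have h2 := hwp (l - π)
    rw [show l - π + 2 * π = l + π by ring] at h2
    linarith
  -- find a point of positivity
  obtain ⟨x₀, hx₀mem, hx₀pos⟩ : ∃ x₀ ∈ Set.Ioo l (l + π), 0 < w x₀ := by
    obtain ⟨x, hx⟩ := hne
    set y := toIcoMod Real.two_pi_pos (l - π) x with hy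
    have hmem : y ∈ Set.Ico (l - π) (l - π + 2 * π) := toIcoMod_mem_Ico _ _ _
    have hwy : w y = w x := by
      have : y = x - toIcoDiv Real.two_pi_pos (l - π) x • (2 * π) := rfl
      rw [this]
      exact hwp.sub_zsmul_eq _
    by_cases hly : l ≤ y
    · refine ⟨y, ⟨lt_of_le_of_ne hly ?_, ?_⟩, ?_⟩
      · intro h
        apply hx
        rw [← hwy, ← h]
        exact hwl
      · have := hmem.2; linarith
      · have h0 : 0 ≤ w y := hge y ⟨hly, by have := hmem.2; linarith⟩
        rcases h0.lt_or_eq with h | h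
        · exact h
        · exact absurd h.symm (hwy ▸ hx)
    · push_neg at hly
      have hyne : w y ≠ 0 := hwy ▸ hx
      have hodd_y := hodd y
      have hne' : w (2 * l - y) ≠ 0 := by rw [hodd_y]; simpa using hyne
      have hub : 2 * l - y ≤ l + π := by have := hmem.1; linarith
      have hlt : 2 * l - y < l + π := lt_of_le_of_ne hub (fun h => hne' (h ▸ hwlpi))
      refine ⟨2 * l - y, ⟨by linarith, hlt⟩, ?_⟩
      have h0 : 0 ≤ w (2 * l - y) := hge _ ⟨by linarith, hub⟩
      exact lt_of_le_of_ne h0 (Ne.symm hne')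
  -- the integrand as a periodic function
  set g : ℝ → ℝ := fun y => Kd (l - y) * w y with hg
  have hgper : Function.Periodic g (2 * π) := by
    intro y
    have h1 : Kd (l - (y + 2 * π)) = Kd (l - y) := by
      have h2 := Kd_periodic (l - y - 2 * π)
      rw [show l - y - 2 * π + 2 * π = l - y by ring] at h2
      rw [show l - (y + 2 * π) = l - y - 2 * π by ring, h2]
    show Kd (l - (y + 2 * π)) * w (y + 2 * π) = Kd (l - y) * w y
    rw [h1, hwp y]
  have step1 : ∫ y in (-π)..π, g y = ∫ y in (l - π)..(l + π), g y := by
    have key := hgper.intervalIntegral_add_eq (-π) (l - π)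
    rw [show -π + 2 * π = π by ring, show l - π + 2 * π = l + π by ring] at key
    exact key
  have step2 : ∫ y in (l - π)..(l + π), g y = ∫ s in (-π)..π, g (l + s) := by
    rw [intervalIntegral.integral_comp_add_left g l, show l + -π = l - π by ring]
  have hgl : ∀ s : ℝ, g (l + s) = Kd (-s) * w (l + s) := fun s => by
    show Kd (l - (l + s)) * w (l + s) = _
    rw [show l - (l + s) = -s by ring]
  have hint1 : ∀ a b : ℝ, IntervalIntegrable (fun s => Kd (-s) * w (l + s)) volume a b := by
    intro a b
    have hc : Continuous fun s : ℝ => w (l + s) :=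
      hwc.comp (continuous_const.add continuous_id)
    have := Kd_intervalIntegrable hc 0 (-1) a b
    simpa using this
  have hint2 : ∀ a b : ℝ, IntervalIntegrable (fun s => Kd s * w (l - s)) volume a b := by
    intro a b
    have hc : Continuous fun s : ℝ => w (l - s) :=
      hwc.comp (continuous_const.sub continuous_id)
    have := Kd_intervalIntegrable hc 0 1 a b
    simpa using this
  have step3 : ∫ s in (-π)..π, g (l + s)
      = ∫ s in (0:ℝ)..π, (Kd s * w (l - s) + Kd (-s) * w (l + s)) := by
    have e1 : ∫ s in (-π)..π, g (l + s) = ∫ s in (-π)..π, Kd (-s) * w (l + s) :=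
      intervalIntegral.integral_congr fun s _ => hgl s
    have e2 := intervalIntegral.integral_comp_neg (a := (0:ℝ)) (b := π)
      (fun s => Kd (-s) * w (l + s))
    simp only [neg_neg, neg_zero, ← sub_eq_add_neg] at e2
    -- e2 : ∫ x in 0..π, Kd x * w (l - x) = ∫ x in -π..0, Kd (-x) * w (l + x)
    have e3 := intervalIntegral.integral_add_adjacent_intervals (hint1 (-π) 0) (hint1 0 π)
    have e4 := intervalIntegral.integral_add (hint2 0 π) (hint1 0 π)
    rw [e1, ← e3, ← e2, e4]
  have step4 : ∫ s in (0:ℝ)..π, (Kd s * w (l - s) + Kd (-s) * w (l + s))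
      = ∫ s in (0:ℝ)..π, ((π - s) / π) * w (l + s) := by
    apply intervalIntegral.integral_congr_ae
    filter_upwards [measure_eq_zero_iff_ae_notMem.mp
      (measure_singleton (π : ℝ) : volume ({π} : Set ℝ) = 0)] with s hs hmem
    rw [Set.uIoc_of_le (by linarith : (0:ℝ) ≤ π)] at hmem
    have hs1 : 0 < s := hmem.1
    have hs2 : s < π := lt_of_le_of_ne hmem.2 (by simpa using hs)
    rw [Kd_eval_pos hs1 hs2, Kd_eval_neg hs1 hs2]
    have hw : w (l - s) = -w (l + s) := by
      have h := hodd (l + s)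
      rw [show 2 * l - (l + s) = l - s by ring] at h
      linarith
    rw [hw]
    field_simp
    ring
  -- positivity of the final integral
  set s₀ := x₀ - l with hs₀def
  have hs₀ : s₀ ∈ Set.Ioo (0:ℝ) π := ⟨by simp [hs₀def]; linarith [hx₀mem.1],
    by simp [hs₀def]; linarith [hx₀mem.2]⟩
  have hw0 : 0 < w (l + s₀) := by rw [show l + s₀ = x₀ by rw [hs₀def]; ring]; exact hx₀pos
  have hcontw : ContinuousAt (fun s : ℝ => w (l + s)) s₀ :=
    (hwc.comp (continuous_const.add continuous_id)).continuousAt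
  have hev : ∀ᶠ s in nhds s₀, 0 < w (l + s) := hcontw.eventually (eventually_gt_nhds hw0)
  obtain ⟨δ, hδpos, hball⟩ := Metric.eventually_nhds_iff.mp hev
  set A := max (s₀ - δ / 2) (s₀ / 2) with hA
  set B := min (s₀ + δ / 2) ((s₀ + π) / 2) with hB
  have hA0 : 0 < A := lt_max_of_lt_right (by linarith [hs₀.1])
  have hAs : A < s₀ := max_lt (by linarith) (by linarith [hs₀.1])
  have hsB : s₀ < B := lt_min (by linarith) (by linarith [hs₀.2])
  have hBπ : B < π := min_lt_of_right_lt (by linarith [hs₀.2])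
  have hAB : A < B := hAs.trans hsB
  set φ : ℝ → ℝ := fun s => ((π - s) / π) * w (l + s) with hφ
  have hφc : Continuous φ := by
    apply Continuous.mul
    · exact (continuous_const.sub continuous_id).div_const π
    · exact hwc.comp (continuous_const.add continuous_id)
  have hφint : ∀ a b : ℝ, IntervalIntegrable φ volume a b := fun a b =>
    hφc.intervalIntegrable a b
  have hnn : ∀ s ∈ Set.Icc (0:ℝ) π, 0 ≤ φ s := by
    intro s hs
    apply mul_nonneg
    · apply div_nonneg _ hπ.le; linarith [hs.2]
    · exact hge (l + s) ⟨by linarith [hs.1], by linarith [hs.2]⟩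
  have h1 : 0 ≤ ∫ s in (0:ℝ)..A, φ s :=
    intervalIntegral.integral_nonneg hA0.le fun u hu =>
      hnn u ⟨hu.1, le_trans hu.2 (by linarith)⟩
  have h3 : 0 ≤ ∫ s in B..π, φ s :=
    intervalIntegral.integral_nonneg hBπ.le fun u hu =>
      hnn u ⟨le_trans (by linarith : (0:ℝ) ≤ B) hu.1, hu.2⟩
  have h2 : 0 < ∫ s in A..B, φ s := by
    apply intervalIntegral.intervalIntegral_pos_of_pos_on (hφint A B) _ hAB
    intro s hs
    have hδs : dist s s₀ < δ := by
      rw [Real.dist_eq, abs_lt]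
      constructor
      · have hh : s₀ - δ / 2 ≤ A := le_max_left _ _; linarith [hs.1]
      · have hh : B ≤ s₀ + δ / 2 := min_le_left _ _; linarith [hs.2]
    have hwpos := hball hδs
    have hsπ : s < π := lt_trans hs.2 hBπ
    exact mul_pos (div_pos (by linarith) hπ) hwpos
  have hsplit : ∫ s in (0:ℝ)..π, φ s
      = (∫ s in (0:ℝ)..A, φ s) + (∫ s in A..B, φ s) + (∫ s in B..π, φ s) := by
    have e1 := intervalIntegral.integral_add_adjacent_intervals (hφint 0 A) (hφint A π)
    have e2 := intervalIntegral.integral_add_adjacent_intervals (hφint A B) (hφint B π)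
    linarith
  have hfin : (0:ℝ) < ∫ s in (0:ℝ)..π, φ s := by
    rw [hsplit]; linarith
  calc (0:ℝ) < ∫ s in (0:ℝ)..π, φ s := hfin
    _ = ∫ y in (-π)..π, g y := by rw [step1, step2, step3, step4]
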